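/- For every f ∈ H, J(P_F f) ≤ J(f), where P_F is the orthogonal projection of H onto F; consequently the infimum of J over H equals the infimum of J over the finite-dimensional subspace F, and any minimizer of J over H belongs to F. -/
import Mathlib


open scoped RealInnerProductSpace

/-- `J(P_F f) ≤ J(f)` for every `f ∈ H`; consequently the infimum of `J`
over `H` equals the infimum of `J` over `F`, and any minimizer of `J` over `H` belongs
to `F`. -/
theorem stmt_11
    (d n : ℕ) (hd : 1 ≤ d)
    (H : Type*) [NormedAddCommGroup H] [InnerProductSpace ℝ H] [CompleteSpace H]
    (ev : H →ₗ[ℝ] (EuclideanSpace ℝ (Fin d) → EuclideanSpace ℝ (Fin d)))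
    (hevc : ∀ f : H, Continuous (ev f))
    (Krepr : EuclideanSpace ℝ (Fin d) → EuclideanSpace ℝ (Fin d) → H)
    (hrepr : ∀ (x v : EuclideanSpace ℝ (Fin d)) (f : H),
      ⟪v, ev f x⟫ = ⟪f, Krepr x v⟫)
    (Kmat : EuclideanSpace ℝ (Fin d) → EuclideanSpace ℝ (Fin d) → Fin d → Fin d → ℝ)
    (hKmat : ∀ x y i j, Kmat x y i j =
      ⟪Krepr x (EuclideanSpace.single i 1), Krepr y (EuclideanSpace.single j 1)⟫)
    (hKc : ∀ i j : Fin d, Continuous fun p :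
      EuclideanSpace ℝ (Fin d) × EuclideanSpace ℝ (Fin d) => Kmat p.1 p.2 i j)
    (a b : Fin n → ℝ) (hab : ∀ i, a i ≤ b i)
    (x : Fin n → ℝ → EuclideanSpace ℝ (Fin d))
    (hx : ∀ i, ContinuousOn (x i) (Set.Icc (a i) (b i)))
    (hLc : ∀ i, Continuous (fun f : H => ∫ t in a i..b i, ev f (x i t)))
    (Lstar : Fin n → EuclideanSpace ℝ (Fin d) → H)
    (hLstar : ∀ (i : Fin n) (v : EuclideanSpace ℝ (Fin d)) (f : H),
      ⟪v, ∫ t in a i..b i, ev f (x i t)⟫ = ⟪f, Lstar i v⟫)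
    (F : Submodule ℝ H)
    (hF : F = Submodule.span ℝ {g : H | ∃ (i : Fin n) (v : EuclideanSpace ℝ (Fin d)), g = Lstar i v})
    (pF : H →ₗ[ℝ] H) (hpF : ∀ f : H, pF f ∈ F) (hpF' : ∀ f : H, f - pF f ∈ Fᗮ)
    -- the regularized loss `J`
    (lam : ℝ) (hlam : 0 < lam)
    (J : H → ℝ)
    (hJ : ∀ f : H, J f = (1 / (n : ℝ)) *
        (∑ i, ‖(∫ t in a i..b i, ev f (x i t)) - x i (b i) + x i (a i)‖ ^ 2)
      + lam * ‖f‖ ^ 2) :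
    (∀ f : H, J (pF f) ≤ J f)
    ∧ (⨅ f : H, J f) = (⨅ g : F, J (g : H))
    ∧ (∀ f : H, (∀ g : H, J f ≤ J g) → f ∈ F) := by

  have hLs : ∀ (i : Fin n) (v : EuclideanSpace ℝ (Fin d)), Lstar i v ∈ F := by
    intro i v; rw [hF]; exact Submodule.subset_span ⟨i, v, rfl⟩
  have hL : ∀ (f : H) (i : Fin n),
      (∫ t in a i..b i, ev (pF f) (x i t)) = ∫ t in a i..b i, ev f (x i t) := by
    intro f i
    have hz : ∀ v : EuclideanSpace ℝ (Fin d),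
        ⟪v, (∫ t in a i..b i, ev f (x i t)) - ∫ t in a i..b i, ev (pF f) (x i t)⟫ = 0 := by
      intro v
      rw [inner_sub_right, hLstar, hLstar, ← inner_sub_left]
      exact (Submodule.mem_orthogonal' F _).mp (hpF' f) _ (hLs i v)
    have h0 := hz ((∫ t in a i..b i, ev f (x i t)) - ∫ t in a i..b i, ev (pF f) (x i t))
    rw [real_inner_self_eq_norm_sq] at h0
    have : (∫ t in a i..b i, ev f (x i t)) - (∫ t in a i..b i, ev (pF f) (x i t)) = 0 := by
      have := sq_eq_zero_iff.mp h0
      exact norm_eq_zero.mp this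
    exact (sub_eq_zero.mp this).symm
  have hS : ∀ f : H,
      (∑ i, ‖(∫ t in a i..b i, ev (pF f) (x i t)) - x i (b i) + x i (a i)‖ ^ 2)
        = ∑ i, ‖(∫ t in a i..b i, ev f (x i t)) - x i (b i) + x i (a i)‖ ^ 2 := by
    intro f; apply Finset.sum_congr rfl; intro i _; rw [hL f i]
  have hnorm : ∀ f : H, ‖f‖ ^ 2 = ‖pF f‖ ^ 2 + ‖f - pF f‖ ^ 2 := by
    intro f
    have horth : ⟪pF f, f - pF f⟫ = 0 :=
      (Submodule.mem_orthogonal F _).mp (hpF' f) _ (hpF f)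
    have hdecomp : f = pF f + (f - pF f) := by abel
    calc ‖f‖ ^ 2 = ‖pF f + (f - pF f)‖ ^ 2 := by rw [← hdecomp]
      _ = ‖pF f‖ ^ 2 + 2 * ⟪pF f, f - pF f⟫ + ‖f - pF f‖ ^ 2 := norm_add_sq_real _ _
      _ = ‖pF f‖ ^ 2 + ‖f - pF f‖ ^ 2 := by rw [horth]; ring
  have hJle : ∀ f : H, J (pF f) ≤ J f := by
    intro f
    rw [hJ, hJ, hS f]
    have h1 := hnorm f
    nlinarith [sq_nonneg ‖f - pF f‖]
  have hJ0 : ∀ f : H, 0 ≤ J f := by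
    intro f; rw [hJ f]
    have : 0 ≤ ∑ i, ‖(∫ t in a i..b i, ev f (x i t)) - x i (b i) + x i (a i)‖ ^ 2 :=
      Finset.sum_nonneg fun i _ => sq_nonneg _
    positivity
  have hbdd : BddBelow (Set.range J) := ⟨0, by rintro y ⟨f, rfl⟩; exact hJ0 f⟩
  have hbdd' : BddBelow (Set.range fun g : F => J (g : H)) :=
    ⟨0, by rintro y ⟨g, rfl⟩; exact hJ0 _⟩
  refine ⟨hJle, ?_, ?_⟩
  · apply le_antisymm
    · exact le_ciInf fun g => ciInf_le hbdd (g : H)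
    · exact le_ciInf fun f => le_trans (ciInf_le hbdd' ⟨pF f, hpF f⟩) (hJle f)
  · intro f hf
    have h1 : J f ≤ J (pF f) := hf _
    have h2 : J (pF f) ≤ J f := hJle f
    have heq : J (pF f) = J f := le_antisymm h2 h1
    rw [hJ, hJ, hS f] at heq
    have hn := hnorm f
    have hz : ‖f - pF f‖ ^ 2 = 0 := by nlinarith
    have : f - pF f = 0 := norm_eq_zero.mp (sq_eq_zero_iff.mp hz)
    have : f = pF f := by
      have := sub_eq_zero.mp this; exact this
    rw [this]; exact hpF f
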